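/- Let G be a topological group and A ⊆ G a set with the strong Baire property (its boundary is nowhere dense), and suppose a ∈ ϱ(A) := int(cl(A)) and b ∈ G \ ϱ(A). Then there exists g ∈ G such that a ∈ ϱ(gA) and b ∈ ϱ(G \ gA). -/

import Mathlib

open Pointwise

theorem stmt18 {G : Type*} [Group G] [TopologicalSpace G] [IsTopologicalGroup G]
    (A : Set G) (hA : interior (frontier A) = ∅)
    (a b : G) (ha : a ∈ interior (closure A)) (hb : b ∉ interior (closure A)) :
    ∃ g : G, a ∈ interior (closure (g • A)) ∧ b ∈ interior (closure ((g • A)ᶜ)) := by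
  set U := interior (closure A) with hU
  set V := interior Aᶜ with hV
  have hbV : b ∈ closure V := by
    have h : (interior (closure A))ᶜ = closure (interior Aᶜ) := by
      rw [interior_compl, closure_compl]
    have hb' : b ∈ (interior (closure A))ᶜ := hb
    rwa [h] at hb'
  let φ : G → G → G := fun c x => c * x⁻¹
  have hcont : ∀ c : G, Continuous (φ c) := fun c => continuous_const.mul continuous_inv
  have heS : (1 : G) ∈ closure (φ b '' V) := by
    have : φ b b ∈ closure (φ b '' V) :=
      map_mem_closure (hcont b) hbV (fun x hx => Set.mem_image_of_mem _ hx)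
    simpa [φ] using this
  have himg : ∀ c : G, ∀ s : Set G, φ c '' s = (fun y : G => y⁻¹ * c) ⁻¹' s := by
    intro c s
    ext y
    constructor
    · rintro ⟨x, hx, rfl⟩
      simpa [φ, mul_assoc] using hx
    · intro hy
      exact ⟨y⁻¹ * c, hy, by simp [φ, mul_assoc]⟩
  have hTopen : IsOpen (φ a '' U) := by
    rw [himg]
    exact isOpen_interior.preimage (continuous_inv.mul continuous_const)
  have heT : (1 : G) ∈ φ a '' U := ⟨a, ha, by simp [φ]⟩
  obtain ⟨g, hgT, hgS⟩ := (_root_.mem_closure_iff.mp heS) _ hTopen heT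
  obtain ⟨u, hu, hgu⟩ := hgT
  obtain ⟨v, hv, hgv⟩ := hgS
  refine ⟨g, ?_, ?_⟩
  · rw [closure_smul, interior_smul]
    refine ⟨u, hu, ?_⟩
    rw [← hgu]; simp [φ, smul_eq_mul, mul_assoc]
  · have hsub : g • V ⊆ interior (closure ((g • A)ᶜ)) := by
      have h3 : g • V = interior (g • Aᶜ) := (interior_smul g Aᶜ).symm
      have h4 : g • Aᶜ = (g • A)ᶜ := by
        ext x; simp [Set.mem_smul_set_iff_inv_smul_mem]
      rw [h3, h4]
      exact interior_mono subset_closure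
    refine hsub ⟨v, hv, ?_⟩
    rw [← hgv]; simp [φ, smul_eq_mul, mul_assoc]
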